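/- Let α ∈ (0,1), K > 0, ρ₁ > ρ₀ > 0, ε > 0, and let E : [ρ₀,ρ₁] → ℝ be a nonnegative absolutely continuous function satisfying E(ρ)^{1-α} ≤ K E'(ρ) + ε(ρ−ρ₀)^{(1-α)/α} for almost every ρ ∈ (ρ₀,ρ₁). Set E⋆ = ((α/(2K))(ρ₁−ρ₀))^{1/α} and ε⋆ = (1/2)(α/(2K))^{(1-α)/α}. If E(ρ₁) ≤ E⋆ and ε ≤ ε⋆, then E(ρ₀) = 0. -/

import Mathlib

open MeasureTheory Set

theorem stmt2 (α K ρ₀ ρ₁ ε : ℝ) (hα : α ∈ Ioo (0:ℝ) 1) (hK : 0 < K)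
    (hρ₀ : 0 < ρ₀) (hρ : ρ₀ < ρ₁) (hε : 0 < ε) (E E' : ℝ → ℝ)
    (hE'int : IntegrableOn E' (Ioo ρ₀ ρ₁))
    (hAC : ∀ ρ ∈ Icc ρ₀ ρ₁, E ρ = E ρ₀ + ∫ t in ρ₀..ρ, E' t)
    (hnonneg : ∀ ρ ∈ Icc ρ₀ ρ₁, 0 ≤ E ρ)
    (hineq : ∀ᵐ ρ ∂(volume.restrict (Ioo ρ₀ ρ₁)),
      E ρ ^ (1 - α) ≤ K * E' ρ + ε * (ρ - ρ₀) ^ ((1 - α) / α))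
    (hE₁ : E ρ₁ ≤ (α / (2 * K) * (ρ₁ - ρ₀)) ^ (1 / α))
    (hεsmall : ε ≤ (1 / 2) * (α / (2 * K)) ^ ((1 - α) / α)) :
    E ρ₀ = 0 := by
  obtain ⟨hα0, hα1⟩ := hα
  have hKne : (0 : ℝ) < 2 * K := by linarith
  set c := α / (2 * K) with hc
  have hc0 : 0 < c := div_pos hα0 hKne
  set β := (1 - α) / α with hβ
  have hβ0 : 0 < β := div_pos (by linarith) hα0
  set G : ℝ → ℝ := fun ρ => (c * (ρ - ρ₀)) ^ (1 / α) with hGdef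
  set g' : ℝ → ℝ := fun ρ => c / α * (c * (ρ - ρ₀)) ^ β with hg'def
  have hβ' : 1 / α - 1 = β := by rw [hβ]; field_simp
  -- continuity of g'
  have hgc : Continuous g' := by
    have h1 : Continuous fun t : ℝ => c * (t - ρ₀) := by continuity
    have h2 : Continuous fun x : ℝ => x ^ β := by
      rw [continuous_iff_continuousAt]
      intro x
      exact Real.continuousAt_rpow_const x β (Or.inr hβ0.le)
    exact continuous_const.mul (h2.comp h1)
  -- derivative of G
  have hGd : ∀ ρ : ℝ, HasDerivAt G (g' ρ) ρ := by
    intro ρ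
    have h1 : HasDerivAt (fun t : ℝ => c * (t - ρ₀)) c ρ := by
      simpa using ((hasDerivAt_id ρ).sub_const ρ₀).const_mul c
    have h2 : HasDerivAt (fun x : ℝ => x ^ (1 / α))
        ((1 / α) * (c * (ρ - ρ₀)) ^ (1 / α - 1)) (c * (ρ - ρ₀)) :=
      Real.hasDerivAt_rpow_const (Or.inr ((le_div_iff₀ hα0).mpr (by linarith)))
    have h3 : HasDerivAt ((fun x : ℝ => x ^ (1 / α)) ∘ fun t : ℝ => c * (t - ρ₀))
        (1 / α * (c * (ρ - ρ₀)) ^ (1 / α - 1) * c) ρ := h2.comp ρ h1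
    convert h3 using 1
    · rfl
    rw [hg'def, hβ']
    ring
  have hFTC : ∀ x : ℝ, G x - G ρ₀ = ∫ t in ρ₀..x, g' t := fun x =>
    (intervalIntegral.integral_eq_sub_of_hasDerivAt (fun t _ => hGd t)
      (hgc.intervalIntegrable ρ₀ x)).symm
  have hG0 : G ρ₀ = 0 := by
    show (c * (ρ₀ - ρ₀)) ^ (1 / α) = 0
    rw [sub_self, mul_zero]
    exact Real.zero_rpow (by positivity)
  have hGnonneg : ∀ ρ, ρ₀ ≤ ρ → 0 ≤ G ρ := by
    intro ρ hρ'
    exact Real.rpow_nonneg (by nlinarith) _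
  -- supersolution inequality
  have hsup : ∀ ρ, ρ₀ ≤ ρ → K * g' ρ + ε * (ρ - ρ₀) ^ β ≤ G ρ ^ (1 - α) := by
    intro ρ hρ'
    have hX : 0 ≤ c * (ρ - ρ₀) := by nlinarith
    have hGpow : G ρ ^ (1 - α) = (c * (ρ - ρ₀)) ^ β := by
      rw [hGdef, ← Real.rpow_mul hX]
      congr 1
      rw [hβ]; field_simp
    have h1 : K * g' ρ = (1 / 2) * (c * (ρ - ρ₀)) ^ β := by
      rw [hg'def, hc]
      field_simp
    have h2 : ε * (ρ - ρ₀) ^ β ≤ (1 / 2) * (c * (ρ - ρ₀)) ^ β := by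
      have := mul_le_mul_of_nonneg_right hεsmall
        (Real.rpow_nonneg (sub_nonneg.mpr hρ') β)
      calc ε * (ρ - ρ₀) ^ β ≤ (1 / 2) * c ^ β * (ρ - ρ₀) ^ β := this
        _ = (1 / 2) * (c * (ρ - ρ₀)) ^ β := by
            rw [Real.mul_rpow hc0.le (sub_nonneg.mpr hρ')]; ring
    rw [hGpow, h1]
    linarith
  -- integrability of E'
  have hE'Icc : IntegrableOn E' (Icc ρ₀ ρ₁) :=
    (integrableOn_Icc_iff_integrableOn_Ioo).mpr hE'int
  -- continuity of E on Icc
  have hEcont : ContinuousOn E (Icc ρ₀ ρ₁) := by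
    have h1 : ContinuousOn (fun x => E ρ₀ + ∫ t in ρ₀..x, E' t) (Icc ρ₀ ρ₁) := by
      apply continuousOn_const.add
      have := intervalIntegral.continuousOn_primitive_interval
        (f := E') (a := ρ₀) (b := ρ₁) (μ := volume) ?_
      · rwa [uIcc_of_le hρ.le] at this
      · rwa [uIcc_of_le hρ.le]
    exact h1.congr hAC
  set D : ℝ → ℝ := fun ρ => G ρ - E ρ with hDdef
  have hGcont : Continuous G := by
    rw [continuous_iff_continuousAt]
    exact fun x => (hGd x).continuousAt
  have hDcont : ContinuousOn D (Icc ρ₀ ρ₁) := hGcont.continuousOn.sub hEcont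
  -- main claim: E ρ₀ ≤ 0
  by_contra hne
  have hE0pos : 0 < E ρ₀ :=
    lt_of_le_of_ne (hnonneg ρ₀ ⟨le_rfl, hρ.le⟩) (Ne.symm hne)
  have hD0 : D ρ₀ < 0 := by
    rw [hDdef]; simp only [hG0]; linarith
  set S : Set ℝ := {ρ | ρ ∈ Icc ρ₀ ρ₁ ∧ 0 ≤ D ρ} with hSdef
  have hρ₁S : ρ₁ ∈ S := by
    refine ⟨⟨hρ.le, le_rfl⟩, ?_⟩
    rw [hDdef]
    simp only [sub_nonneg]
    exact hE₁
  have hSne : S.Nonempty := ⟨ρ₁, hρ₁S⟩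
  have hSbdd : BddBelow S := ⟨ρ₀, fun x hx => hx.1.1⟩
  have hSclosed : IsClosed S := by
    have : S = Icc ρ₀ ρ₁ ∩ D ⁻¹' Ici 0 := by
      ext x; simp [hSdef, Set.mem_preimage, and_comm]
    rw [this]
    exact hDcont.preimage_isClosed_of_isClosed isClosed_Icc isClosed_Ici
  set s := sInf S with hsdef
  have hsS : s ∈ S := hSclosed.csInf_mem hSne hSbdd
  have hs0 : ρ₀ ≤ s := hsS.1.1
  have hs1 : s ≤ ρ₁ := hsS.1.2
  have hDs : 0 ≤ D s := hsS.2
  have hDneg : ∀ ρ, ρ₀ ≤ ρ → ρ < s → D ρ < 0 := by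
    intro ρ h1 h2
    by_contra h
    push_neg at h
    have : ρ ∈ S := ⟨⟨h1, le_trans h2.le hs1⟩, h⟩
    exact absurd (csInf_le hSbdd this) (not_le.mpr h2)
  -- difference formula
  have hE'ii : IntervalIntegrable E' volume ρ₀ s := by
    rw [intervalIntegrable_iff_integrableOn_Ioc_of_le hs0]
    exact hE'Icc.mono_set (fun x hx => ⟨hx.1.le, hx.2.trans hs1⟩)
  have hEs : E s = E ρ₀ + ∫ t in ρ₀..s, E' t := hAC s ⟨hs0, hs1⟩
  have hDdiff : D s - D ρ₀ = ∫ t in ρ₀..s, (g' t - E' t) := by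
    rw [intervalIntegral.integral_sub (hgc.intervalIntegrable ρ₀ s) hE'ii,
      ← hFTC s, hDdef]
    simp only [hEs]
    ring
  -- the integral is nonpositive
  have hint : (∫ t in ρ₀..s, (g' t - E' t)) ≤ 0 := by
    rw [intervalIntegral.integral_of_le hs0,
      ← setIntegral_congr_set (Ioo_ae_eq_Ioc (a := ρ₀) (b := s))]
    apply integral_nonpos_of_ae
    have hss : Ioo ρ₀ s ⊆ Ioo ρ₀ ρ₁ := Ioo_subset_Ioo le_rfl hs1
    have hineq' := ae_restrict_of_ae_restrict_of_subset hss hineq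
    have hmem := ae_restrict_mem (μ := volume) (measurableSet_Ioo (a := ρ₀) (b := s))
    filter_upwards [hineq', hmem] with ρ h1 h2
    have hρIcc : ρ ∈ Icc ρ₀ ρ₁ := ⟨h2.1.le, (h2.2.trans_le hs1).le⟩
    have hDρ : D ρ < 0 := hDneg ρ h2.1.le h2.2
    have hEG : G ρ < E ρ := sub_neg.mp hDρ
    have hmono : G ρ ^ (1 - α) ≤ E ρ ^ (1 - α) :=
      Real.rpow_le_rpow (hGnonneg ρ h2.1.le) hEG.le (by linarith)
    have := hsup ρ h2.1.le
    have hKE : K * g' ρ ≤ K * E' ρ := by linarith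
    have : g' ρ ≤ E' ρ := le_of_mul_le_mul_left hKE hK
    simp only [Pi.zero_apply]
    linarith
  linarith [hDs, hD0, hDdiff ▸ hint]
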